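/- The quantity 1/(t_k(t_k+1)) equals the decrease 1/t_k − 1/(t_k+1), is strictly positive and strictly decreasing in t_k for positive integers t_k, so repeatedly pulling the arm with the largest ζ_k/(t_k(t_k+1)) equalizes the weighted pull counts up to multiplicative constants: in the limit, t_k/t → sqrt(ζ_k)/Σ_s sqrt(ζ_s). -/

import Mathlib

open Filter

private lemma idx_anti17 {z a b : ℝ} (hz : 0 < z) (ha : 0 < a) (hab : a ≤ b) :
    z / (b * (b + 1)) ≤ z / (a * (a + 1)) := by
  have hb : 0 < b := lt_of_lt_of_le ha hab
  rw [div_le_div_iff₀ (by positivity) (by positivity)]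
  apply mul_le_mul_of_nonneg_left _ hz.le
  nlinarith

/-- The quantity `1/(t_k(t_k+1))` equals the decrease
`1/t_k − 1/(t_k+1)`, is strictly positive and strictly decreasing in `t_k` for
positive integers `t_k`; consequently, under the greedy index rule that repeatedly
pulls the arm with the largest `ζ_k/(t_k(t_k+1))`, the fraction of pulls allocated
to each arm satisfies `t_k/t → sqrt(ζ_k)/∑_s sqrt(ζ_s)`. -/
theorem stmt17 (K : ℕ) (hK : 0 < K) (ζ : Fin K → ℝ) (hζ : ∀ k, 0 < ζ k)
    (counts : ℕ → Fin K → ℕ)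
    (hinit : ∀ k, 1 ≤ counts 0 k)
    (hstep : ∀ τ : ℕ, ∃ c : Fin K,
      (∀ k, counts (τ + 1) k = counts τ k + if k = c then 1 else 0) ∧
      (∀ s, ζ s / ((counts τ s : ℝ) * (counts τ s + 1)) ≤
            ζ c / ((counts τ c : ℝ) * (counts τ c + 1)))) :
    (∀ a : ℕ, 1 ≤ a →
      ((1 : ℝ) / ((a : ℝ) * (a + 1)) = 1 / (a : ℝ) - 1 / ((a : ℝ) + 1)) ∧
      (0 < (1 : ℝ) / ((a : ℝ) * (a + 1))) ∧
      (∀ b : ℕ, a < b →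
        (1 : ℝ) / ((b : ℝ) * (b + 1)) < 1 / ((a : ℝ) * (a + 1)))) ∧
    (∀ k, Tendsto (fun τ => (counts τ k : ℝ) / (∑ s, (counts τ s : ℝ)))
      atTop (nhds (Real.sqrt (ζ k) / ∑ s, Real.sqrt (ζ s)))) := by
  have hK' : Nonempty (Fin K) := Fin.pos_iff_nonempty.mp hK
  constructor
  · intro a ha
    have ha1 : (1:ℝ) ≤ (a:ℝ) := by exact_mod_cast ha
    have ha0 : (0:ℝ) < (a:ℝ) := by linarith
    have hane : (a:ℝ) ≠ 0 := ne_of_gt ha0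
    have hane1 : (a:ℝ) + 1 ≠ 0 := by positivity
    refine ⟨by field_simp; ring, ?_, ?_⟩
    · have : (0:ℝ) < (a:ℝ) * ((a:ℝ) + 1) := by positivity
      exact one_div_pos.mpr this
    · intro b hb
      have hab : (a:ℝ) < (b:ℝ) := by exact_mod_cast hb
      rw [div_lt_div_iff₀ (by nlinarith) (by positivity)]
      nlinarith
  -- main convergence statement
  have hmono : ∀ k, Monotone (fun τ => counts τ k) := by
    intro k
    apply monotone_nat_of_le_succ
    intro τ
    obtain ⟨c, hc1, _⟩ := hstep τ
    rw [hc1 k]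
    exact Nat.le_add_right _ _
  have hpos : ∀ τ k, 1 ≤ counts τ k := fun τ k =>
    le_trans (hinit k) (hmono k (Nat.zero_le τ))
  have hposR : ∀ τ k, (0:ℝ) < (counts τ k : ℝ) := by
    intro τ k
    exact_mod_cast Nat.lt_of_lt_of_le Nat.zero_lt_one (hpos τ k)
  -- invariant: once k has been pulled, every index is bounded by ζ k/((t_k-1)t_k)
  have claimA : ∀ τ (k : Fin K), counts 0 k < counts τ k → ∀ j,
      ζ j / ((counts τ j : ℝ) * ((counts τ j : ℝ) + 1)) ≤
        ζ k / (((counts τ k : ℝ) - 1) * (counts τ k : ℝ)) := by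
    intro τ
    induction τ with
    | zero => intro k hk; exact absurd hk (lt_irrefl _)
    | succ τ ih =>
      intro k hk j
      obtain ⟨c, hc1, hc2⟩ := hstep τ
      by_cases hkc : k = c
      · subst hkc
        have hck : counts (τ+1) k = counts τ k + 1 := by rw [hc1 k]; simp
        have hrhs : ζ k / (((counts (τ+1) k : ℝ) - 1) * (counts (τ+1) k : ℝ)) =
            ζ k / ((counts τ k : ℝ) * ((counts τ k : ℝ) + 1)) := by
          rw [hck]; push_cast; ring_nf
        rw [hrhs]
        by_cases hjc : j = k
        · subst hjc
          rw [hck]; push_cast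
          have := idx_anti17 (hζ j) (hposR τ j)
            (le_of_lt (lt_add_one ((counts τ j : ℝ))))
          linarith [this]
        · have hj' : counts (τ+1) j = counts τ j := by rw [hc1 j]; simp [hjc]
          rw [hj']
          exact hc2 j
      · have hck : counts (τ+1) k = counts τ k := by rw [hc1 k]; simp [hkc]
        have hk' : counts 0 k < counts τ k := by omega
        have B := ih k hk'
        rw [hck]
        by_cases hjc : j = c
        · subst hjc
          have hcj : counts (τ+1) j = counts τ j + 1 := by rw [hc1 j]; simp
          rw [hcj]; push_cast
          have h1 := idx_anti17 (hζ j) (hposR τ j)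
            (le_of_lt (lt_add_one ((counts τ j : ℝ))))
          have h2 := B j
          linarith
        · have hj' : counts (τ+1) j = counts τ j := by rw [hc1 j]; simp [hjc]
          rw [hj']
          exact B j
  -- total count grows by 1 each step
  have hsum : ∀ τ, ∑ s, counts τ s = (∑ s, counts 0 s) + τ := by
    intro τ
    induction τ with
    | zero => simp
    | succ τ ih =>
      obtain ⟨c, hc1, _⟩ := hstep τ
      have h : ∑ s, counts (τ+1) s = (∑ s, counts τ s) + 1 := by
        simp only [hc1]
        rw [Finset.sum_add_distrib]
        simp
      omega
  -- some arm has unbounded counts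
  have hex : ∀ M : ℕ, ∃ j, M ≤ counts (K * M) j := by
    intro M
    have h1 : ∑ _s : Fin K, M ≤ ∑ s, counts (K*M) s := by
      rw [hsum]
      simp only [Finset.sum_const, Finset.card_univ, Fintype.card_fin, smul_eq_mul]
      omega
    obtain ⟨j, _, hj⟩ := Finset.exists_le_of_sum_le Finset.univ_nonempty h1
    exact ⟨j, hj⟩
  obtain ⟨j₀, hj₀⟩ := Finite.exists_infinite_fiber (fun M => Classical.choose (hex M))
  have hj₀top : Tendsto (fun τ => counts τ j₀) atTop atTop := by
    apply tendsto_atTop_atTop_of_monotone (hmono j₀)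
    intro b
    obtain ⟨M, hM, hMb⟩ := (Set.infinite_coe_iff.mp hj₀).exists_gt b
    have hMspec := Classical.choose_spec (hex M)
    have : Classical.choose (hex M) = j₀ := hM
    rw [this] at hMspec
    exact ⟨K * M, le_trans (le_of_lt hMb) hMspec⟩
  -- every arm has counts tending to infinity
  have htop : ∀ k, Tendsto (fun τ => counts τ k) atTop atTop := by
    intro k
    apply tendsto_atTop_atTop_of_monotone (hmono k)
    by_contra hbd
    push_neg at hbd
    obtain ⟨b, hb⟩ := hbd
    have hb2 : 2 ≤ b := by have := hpos 0 k; have := hb 0; omega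
    have hbR : (1:ℝ) ≤ (b:ℝ) := by exact_mod_cast (by omega : 1 ≤ b)
    set ε := ζ k / ((b:ℝ) * ((b:ℝ)+1)) with hεdef
    have hε0 : 0 < ε := by
      apply div_pos (hζ k); nlinarith
    have hεle : ∀ τ, ε ≤ ζ k / ((counts τ k : ℝ) * ((counts τ k : ℝ) + 1)) := by
      intro τ
      apply idx_anti17 (hζ k) (hposR τ k)
      exact_mod_cast le_of_lt (hb τ)
    obtain ⟨N, hN⟩ := exists_nat_gt (ζ j₀ / ε)
    have hN0 : 0 < N := by
      have : (0:ℝ) < ζ j₀ / ε := div_pos (hζ j₀) hε0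
      have : (0:ℝ) < (N:ℝ) := lt_trans this hN
      exact_mod_cast this
    obtain ⟨τ, hτ⟩ := (hj₀top.eventually_ge_atTop (max (counts 0 j₀ + 1) (N+1))).exists
    have h1 : counts 0 j₀ < counts τ j₀ := by
      have := le_trans (le_max_left _ _) hτ; omega
    have h2 : (N:ℝ) + 1 ≤ (counts τ j₀ : ℝ) := by
      have := le_trans (le_max_right _ _) hτ
      exact_mod_cast this
    have hA := claimA τ j₀ h1 k
    have ht1' : (1:ℝ) ≤ (counts τ j₀ : ℝ) := by exact_mod_cast hpos τ j₀
    set t := (counts τ j₀ : ℝ) with htdef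
    have ht1 : (1:ℝ) ≤ t := ht1'
    have htt : (0:ℝ) < (t - 1) * t := by
      have hNR : (1:ℝ) ≤ (N:ℝ) := by exact_mod_cast hN0
      nlinarith
    have hkey : ζ k / ((counts τ k : ℝ) * ((counts τ k : ℝ) + 1)) * ((t-1)*t) ≤ ζ j₀ := by
      rw [← le_div_iff₀ htt]
      exact hA
    have hεt := hεle τ
    have hNle : (N:ℝ) ≤ (t-1)*t := by
      have hNR : (1:ℝ) ≤ (N:ℝ) := by exact_mod_cast hN0
      nlinarith
    have : ζ j₀ < ε * (N:ℝ) := by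
      rw [div_lt_iff₀ hε0] at hN; linarith [hN]
    nlinarith [mul_le_mul_of_nonneg_right hεt (le_of_lt htt)]
  -- key sqrt comparison
  have key : ∀ (k j : Fin K) (τ : ℕ), counts 0 k < counts τ k →
      Real.sqrt (ζ j) * ((counts τ k : ℝ) - 1) ≤
        Real.sqrt (ζ k) * ((counts τ j : ℝ) + 1) := by
    intro k j τ hk
    have h := claimA τ k hk j
    have ha2' : (2:ℝ) ≤ (counts τ k : ℝ) := by
      have : counts 0 k + 1 ≤ counts τ k := hk
      have h0 : 1 ≤ counts 0 k := hinit k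
      have : 2 ≤ counts τ k := by omega
      exact_mod_cast this
    have hb1' : (1:ℝ) ≤ (counts τ j : ℝ) := by exact_mod_cast hpos τ j
    set a := (counts τ k : ℝ) with hadef
    set b := (counts τ j : ℝ) with hbdef
    have ha2 : (2:ℝ) ≤ a := ha2'
    have hb1 : (1:ℝ) ≤ b := hb1'
    have h1 : ζ j * ((a-1)*a) ≤ ζ k * (b*(b+1)) := by
      rw [div_le_div_iff₀ (by nlinarith) (by nlinarith)] at h
      nlinarith [h]
    have e1 : (Real.sqrt (ζ j))^2 = ζ j := Real.sq_sqrt (hζ j).le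
    have e2 : (Real.sqrt (ζ k))^2 = ζ k := Real.sq_sqrt (hζ k).le
    have h2 : (Real.sqrt (ζ j) * (a-1))^2 ≤ (Real.sqrt (ζ k) * (b+1))^2 := by
      rw [mul_pow, mul_pow, e1, e2]
      nlinarith [hζ j, hζ k, h1]
    have hx : 0 ≤ Real.sqrt (ζ j) * (a-1) := by
      apply mul_nonneg (Real.sqrt_nonneg _); linarith
    have hy : 0 ≤ Real.sqrt (ζ k) * (b+1) := by
      apply mul_nonneg (Real.sqrt_nonneg _); linarith
    calc Real.sqrt (ζ j) * (a-1) = Real.sqrt ((Real.sqrt (ζ j) * (a-1))^2) :=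
          (Real.sqrt_sq hx).symm
      _ ≤ Real.sqrt ((Real.sqrt (ζ k) * (b+1))^2) := Real.sqrt_le_sqrt h2
      _ = Real.sqrt (ζ k) * (b+1) := Real.sqrt_sq hy
  -- ratio convergence
  have hrt : ∀ k j : Fin K, Tendsto (fun τ => (counts τ j : ℝ) / (counts τ k : ℝ))
      atTop (nhds (Real.sqrt (ζ j) / Real.sqrt (ζ k))) := by
    intro k j
    have hk0 : 0 < Real.sqrt (ζ k) := Real.sqrt_pos.2 (hζ k)
    set r := Real.sqrt (ζ j) / Real.sqrt (ζ k) with hrdef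
    have hinv : Tendsto (fun τ => ((counts τ k : ℝ))⁻¹) atTop (nhds 0) :=
      tendsto_inv_atTop_zero.comp (tendsto_natCast_atTop_atTop.comp (htop k))
    have hlow : Tendsto (fun τ => r * (1 - ((counts τ k : ℝ))⁻¹) - ((counts τ k : ℝ))⁻¹)
        atTop (nhds r) := by
      have h := ((tendsto_const_nhds (x := r)).mul
        ((tendsto_const_nhds (x := (1:ℝ))).sub hinv)).sub hinv
      simpa using h
    have hhigh : Tendsto (fun τ => r * (1 + ((counts τ k : ℝ))⁻¹) + ((counts τ k : ℝ))⁻¹)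
        atTop (nhds r) := by
      have h := ((tendsto_const_nhds (x := r)).mul
        ((tendsto_const_nhds (x := (1:ℝ))).add hinv)).add hinv
      simpa using h
    apply tendsto_of_tendsto_of_tendsto_of_le_of_le' hlow hhigh
    · filter_upwards [(htop k).eventually_ge_atTop (counts 0 k + 1)] with τ h1
      have hA := key k j τ (by omega)
      set a := (counts τ k : ℝ) with hadef
      set b := (counts τ j : ℝ) with hbdef
      have ha : (0:ℝ) < a := hposR τ k
      rw [le_div_iff₀ ha]
      have hane : a ≠ 0 := ne_of_gt ha
      have heq : (r * (1 - a⁻¹) - a⁻¹) * a = r * (a - 1) - 1 := by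
        field_simp
      rw [heq]
      have hr1 : r * (a - 1) ≤ b + 1 := by
        rw [hrdef, div_mul_eq_mul_div, div_le_iff₀ hk0]
        nlinarith [hA]
      linarith
    · filter_upwards [(htop j).eventually_ge_atTop (counts 0 j + 1)] with τ h1
      have hA := key j k τ (by omega)
      set a := (counts τ k : ℝ) with hadef
      set b := (counts τ j : ℝ) with hbdef
      have ha : (0:ℝ) < a := hposR τ k
      rw [div_le_iff₀ ha]
      have hane : a ≠ 0 := ne_of_gt ha
      have heq : (r * (1 + a⁻¹) + a⁻¹) * a = r * (a + 1) + 1 := by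
        field_simp
      rw [heq]
      have hr1 : b - 1 ≤ r * (a + 1) := by
        rw [hrdef, div_mul_eq_mul_div, le_div_iff₀ hk0]
        nlinarith [hA]
      linarith
  -- conclude
  intro k
  have hk0 : 0 < Real.sqrt (ζ k) := Real.sqrt_pos.2 (hζ k)
  have h1 : Tendsto (fun τ => ∑ s, (counts τ s : ℝ) / (counts τ k : ℝ))
      atTop (nhds (∑ s, Real.sqrt (ζ s) / Real.sqrt (ζ k))) :=
    tendsto_finset_sum _ (fun s _ => hrt k s)
  have hne : (∑ s, Real.sqrt (ζ s) / Real.sqrt (ζ k)) ≠ 0 := by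
    have : 0 < ∑ s, Real.sqrt (ζ s) / Real.sqrt (ζ k) :=
      Finset.sum_pos (fun s _ => div_pos (Real.sqrt_pos.2 (hζ s)) hk0)
        Finset.univ_nonempty
    exact ne_of_gt this
  have h2 := h1.inv₀ hne
  have e1 : ∀ τ, (∑ s, (counts τ s : ℝ) / (counts τ k : ℝ))⁻¹ =
      (counts τ k : ℝ) / (∑ s, (counts τ s : ℝ)) := by
    intro τ; rw [← Finset.sum_div, inv_div]
  have e2 : (∑ s, Real.sqrt (ζ s) / Real.sqrt (ζ k))⁻¹ =
      Real.sqrt (ζ k) / ∑ s, Real.sqrt (ζ s) := by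
    rw [← Finset.sum_div, inv_div]
  rw [← e2]
  exact h2.congr e1
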